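/- Let S(k,n,∞) be the subgroup of S̄∞ generated by the transposition (k, n+1) and the subgroup S(n,∞). Then the product O_k P_n is the orthogonal projection onto the subspace {η ∈ H : K(s)η = η for all s ∈ S(k,n,∞)}. -/

import Mathlib

open MeasureTheory Filter Topology
open scoped InnerProductSpace

/-- The pointwise stabilizer `S(n,∞)` of the first `n` natural numbers inside the full
symmetric group of `ℕ` (all bijections of `ℕ`). -/
def stabSet (n : ℕ) : Set (Equiv.Perm ℕ) := {s | ∀ i < n, s i = i}

/-- `σ_m^n`, the product of the disjoint transpositions `(n+j, n+m+j)` for `j = 0,…,m-1`. -/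
def sigmaPerm (n m : ℕ) : Equiv.Perm ℕ :=
  ((List.range m).map fun j => Equiv.swap (n + j) (n + m + j)).prod

lemma list_prod_fix (l : List (Equiv.Perm ℕ)) (x : ℕ) (h : ∀ p ∈ l, p x = x) :
    l.prod x = x := by
  induction l with
  | nil => rfl
  | cons a t ih =>
    rw [List.prod_cons, Equiv.Perm.mul_apply,
      ih (fun p hp => h p (List.mem_cons_of_mem a hp)), h a List.mem_cons_self]

lemma sigmaPerm_fix (n m i : ℕ) (hi : i < n) : sigmaPerm n m i = i := by
  apply list_prod_fix
  intro p hp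
  simp only [List.mem_map, List.mem_range] at hp
  obtain ⟨j, hj, rfl⟩ := hp
  exact Equiv.swap_apply_of_ne_of_ne (by omega) (by omega)

lemma sigmaPerm_top (n m j : ℕ) (hj : j < m) : sigmaPerm n m (n + m + j) = n + j := by
  unfold sigmaPerm
  have h1 : List.range m = List.range' 0 j ++ (j :: List.range' (j+1) (m - (j+1))) := by
    have e1 := List.range'_append_1 (s := 0) (m := j) (n := m - j)
    have e2 : List.range' (0 + j) (m - j) = j :: List.range' (j+1) (m - (j+1)) := by
      rw [Nat.zero_add, show m - j = (m - (j+1)) + 1 by omega, List.range'_succ]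
    rw [e2] at e1
    have e3 : List.range' 0 (j + (m - j)) = List.range' 0 m := by rw [show j + (m - j) = m by omega]
    exact (List.range_eq_range' (n := m)).trans (e1.trans e3).symm
  rw [h1, List.map_append, List.map_cons, List.prod_append, List.prod_cons,
    Equiv.Perm.mul_apply, Equiv.Perm.mul_apply]
  have hB : ((List.range' (j+1) (m - (j+1))).map
      (fun j => Equiv.swap (n + j) (n + m + j))).prod (n + m + j) = n + m + j := by
    apply list_prod_fix
    intro p hp
    simp only [List.mem_map, List.mem_range'] at hp
    obtain ⟨j', ⟨i, hi, rfl⟩, rfl⟩ := hp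
    exact Equiv.swap_apply_of_ne_of_ne (by omega) (by omega)
  rw [hB, Equiv.swap_apply_right]
  apply list_prod_fix
  intro p hp
  simp only [List.mem_map, List.mem_range'] at hp
  obtain ⟨j', ⟨i, hi, rfl⟩, rfl⟩ := hp
  exact Equiv.swap_apply_of_ne_of_ne (by omega) (by omega)

lemma exists_corrector (n : ℕ) (v : Equiv.Perm ℕ) (hv : ∀ i < n, v i = i) (t : ℕ) :
    ∃ (c : Equiv.Perm ℕ) (M : ℕ), (∀ i, i < n ∨ M ≤ i → c i = i) ∧
      ∀ i < n + t, (c * v) i = i := by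
  induction t with
  | zero =>
    exact ⟨1, 0, fun i _ => rfl, fun i hi => by
      simp only [Equiv.Perm.mul_apply, Equiv.Perm.one_apply]
      exact hv i (by omega)⟩
  | succ t ih =>
    obtain ⟨c, M, hc, hfix⟩ := ih
    have hy : n + t ≤ (c * v) (n + t) := by
      by_contra h
      push_neg at h
      have h1 : (c * v) ((c * v) (n + t)) = (c * v) (n + t) := hfix _ h
      have h2 := (c * v).injective h1
      omega
    refine ⟨Equiv.swap (n+t) ((c * v) (n+t)) * c, max M ((c * v) (n+t) + 1), ?_, ?_⟩
    · intro i hi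
      have hci : c i = i := hc i (by rcases hi with h | h; exact Or.inl h; exact Or.inr (by omega))
      rw [Equiv.Perm.mul_apply, hci]
      exact Equiv.swap_apply_of_ne_of_ne (by omega) (by omega)
    · intro i hi
      have : (Equiv.swap (n+t) ((c * v) (n+t)) * c) * v
          = Equiv.swap (n+t) ((c * v) (n+t)) * (c * v) := by group
      rw [this, Equiv.Perm.mul_apply]
      rcases Nat.lt_or_ge i (n + t) with h | h
      · rw [hfix i h]
        exact Equiv.swap_apply_of_ne_of_ne (by omega) (by omega)
      · have : i = n + t := by omega
        subst this
        exact Equiv.swap_apply_right _ _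

lemma strong_conv {H : Type*} [NormedAddCommGroup H] [InnerProductSpace ℂ H]
    (η : H) (u : ℕ → H) (hn : ∀ m, ‖u m‖ = ‖η‖)
    (hw : Tendsto (fun m => ⟪u m, η⟫_ℂ) atTop (𝓝 (⟪η, η⟫_ℂ))) :
    Tendsto u atTop (𝓝 η) := by
  rw [tendsto_iff_norm_sub_tendsto_zero]
  have h2 : ∀ m, ‖u m - η‖^2 = 2*‖η‖^2 - 2 * RCLike.re ⟪u m, η⟫_ℂ := by
    intro m
    rw [@norm_sub_sq ℂ, hn]
    ring
  have h3 : Tendsto (fun m => RCLike.re ⟪u m, η⟫_ℂ) atTop (𝓝 (‖η‖^2)) := by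
    have := (RCLike.continuous_re.tendsto _).comp hw
    simpa [Function.comp_def, inner_self_eq_norm_sq, ← Complex.ofReal_pow] using this
  have h1 : Tendsto (fun m => ‖u m - η‖^2) atTop (𝓝 0) := by
    simp only [h2]
    have h4 := (h3.const_mul 2).const_sub (2*‖η‖^2)
    simpa using h4
  have h4 := h1.sqrt
  simpa [Real.sqrt_sq (norm_nonneg _)] using h4

lemma stab_fixes {H : Type*} [NormedAddCommGroup H] [InnerProductSpace ℂ H]
    (K : Equiv.Perm ℕ →* (H →L[ℂ] H))
    (hunit : ∀ g (η : H), ‖K g η‖ = ‖η‖)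
    (hcont : ∀ (η : H) (ε : ℝ), 0 < ε → ∃ k : ℕ, ∀ s ∈ stabSet k, ‖K s η - η‖ < ε)
    (n : ℕ) (η : H)
    (hσ : Tendsto (fun m => K (sigmaPerm n m) η) atTop (𝓝 η)) :
    ∀ s ∈ stabSet n, K s η = η := by
  have hd : ∀ (g : Equiv.Perm ℕ) (x y : H), ‖K g x - K g y‖ = ‖x - y‖ := fun g x y => by
    rw [← map_sub]; exact hunit g _
  have hmul : ∀ (a b : Equiv.Perm ℕ) (x : H), K (a * b) x = K a (K b x) := fun a b x => by
    rw [map_mul]; rfl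
  have hzero : ∀ x : H, (∀ ε : ℝ, 0 < ε → ‖x‖ ≤ 3 * ε) → x = 0 := by
    intro x hx
    rw [← norm_le_zero_iff]
    apply le_of_forall_pos_le_add
    intro ε hε
    calc ‖x‖ ≤ 3 * (ε / 3) := hx (ε/3) (by linarith)
      _ ≤ 0 + ε := by linarith
  -- step 2 : finitely supported elements of stabSet n fix η
  have step2 : ∀ (c : Equiv.Perm ℕ) (M : ℕ), (∀ i, i < n ∨ M ≤ i → c i = i) → K c η = η := by
    intro c M hc
    rw [← sub_eq_zero]
    apply hzero
    intro ε hε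
    obtain ⟨k, hk⟩ := hcont η ε hε
    obtain ⟨m₀, hm₀⟩ := Metric.tendsto_atTop.mp hσ ε hε
    set m := max m₀ (max M k) with hmdef
    set σ := sigmaPerm n m with hσdef
    have hdist : ‖K σ η - η‖ < ε := by
      have := hm₀ m (le_max_left _ _)
      rwa [dist_eq_norm] at this
    have hσtop : ∀ i, n ≤ i → i < n + m → σ (i + m) = i := by
      intro i h1 h2
      have h3 := sigmaPerm_top n m (i - n) (by omega)
      rw [show n + m + (i - n) = i + m by omega, show n + (i - n) = i by omega] at h3
      exact h3
    set g := σ * c * σ⁻¹ with hg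
    have hgstab : g ∈ stabSet k := by
      intro i hi
      have hik : i < n + m := by omega
      show σ (c (σ⁻¹ i)) = i
      by_cases hin : i < n
      · have h1 : σ⁻¹ i = i := by
          rw [Equiv.Perm.inv_eq_iff_eq, sigmaPerm_fix n m i hin]
        rw [h1, hc i (Or.inl hin), sigmaPerm_fix n m i hin]
      · push_neg at hin
        have h1 : σ⁻¹ i = i + m := by
          rw [Equiv.Perm.inv_eq_iff_eq, hσtop i hin hik]
        rw [h1, hc (i + m) (Or.inr (by omega)), hσtop i hin hik]
    have hgnear : ‖K g η - η‖ < ε := hk g hgstab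
    have heq : K c η = K σ⁻¹ (K g (K σ η)) := by
      rw [← hmul, ← hmul]
      congr 1
      rw [hg]
      group
    calc ‖K c η - η‖ = ‖K σ (K c η) - K σ η‖ := (hd σ _ _).symm
      _ = ‖K g (K σ η) - K σ η‖ := by
          rw [heq, ← hmul, ← hmul, show σ * σ⁻¹ * g = g by group]
      _ = ‖(K g (K σ η) - K g η) + ((K g η - η) + (η - K σ η))‖ := by abel_nf
      _ ≤ ‖K g (K σ η) - K g η‖ + (‖K g η - η‖ + ‖η - K σ η‖) :=
          (norm_add_le _ _).trans (by gcongr; exact norm_add_le _ _)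
      _ ≤ ε + (ε + ε) := by
          have e1 : ‖K g (K σ η) - K g η‖ = ‖K σ η - η‖ := hd g _ _
          have e2 : ‖η - K σ η‖ = ‖K σ η - η‖ := norm_sub_rev _ _
          rw [e1, e2]
          have := le_of_lt hdist
          gcongr
      _ = 3 * ε := by ring
  -- step 3 : general elements of stabSet n
  intro s hs
  rw [← sub_eq_zero]
  apply hzero
  intro ε hε
  obtain ⟨k, hk⟩ := hcont η ε hε
  obtain ⟨m₀, hm₀⟩ := Metric.tendsto_atTop.mp hσ ε hε
  set σ := sigmaPerm n m₀ with hσdef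
  have hdist : ‖K σ η - η‖ < ε := by
    have := hm₀ m₀ le_rfl
    rwa [dist_eq_norm] at this
  set u := σ⁻¹ * s * σ with hu
  have hufix : ∀ i < n, u i = i := by
    intro i hi
    show σ⁻¹ (s (σ i)) = i
    rw [sigmaPerm_fix n m₀ i hi, hs i hi, Equiv.Perm.inv_eq_iff_eq, sigmaPerm_fix n m₀ i hi]
  obtain ⟨c, M, hc, hcu⟩ := exists_corrector n u hufix k
  have hcustab : c * u ∈ stabSet k := fun i hi => hcu i (by omega)
  have hcusmall : ‖K (c * u) η - η‖ < ε := hk _ hcustab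
  have hcinv : K c⁻¹ η = η := by
    apply step2 c⁻¹ M
    intro i hi
    rw [Equiv.Perm.inv_eq_iff_eq]
    exact (hc i hi).symm
  have huη : ‖K u η - η‖ < ε := by
    have e1 : K u η = K c⁻¹ (K (c * u) η) := by
      rw [← hmul]
      congr 1
      group
    calc ‖K u η - η‖ = ‖K c⁻¹ (K (c * u) η) - K c⁻¹ η‖ := by rw [e1, hcinv]
      _ = ‖K (c * u) η - η‖ := hd c⁻¹ _ _
      _ < ε := hcusmall
  have hsσ : K s (K σ η) = K σ (K u η) := by
    rw [← hmul, ← hmul]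
    congr 1
    rw [hu]
    group
  calc ‖K s η - η‖
      = ‖(K s η - K s (K σ η)) + ((K s (K σ η) - K σ η) + (K σ η - η))‖ := by abel_nf
    _ ≤ ‖K s η - K s (K σ η)‖ + (‖K s (K σ η) - K σ η‖ + ‖K σ η - η‖) :=
        (norm_add_le _ _).trans (by gcongr; exact norm_add_le _ _)
    _ ≤ ε + (ε + ε) := by
        have e1 : ‖K s η - K s (K σ η)‖ = ‖η - K σ η‖ := hd s _ _
        have e2 : ‖K s (K σ η) - K σ η‖ = ‖K u η - η‖ := by
          rw [hsσ]; exact hd σ _ _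
        rw [e1, e2, norm_sub_rev]
        gcongr
    _ = 3 * ε := by ring

/-- `O_k · P_n` is the orthogonal projection onto the subspace of vectors
fixed by `K(s)` for all `s` in the subgroup `S(k,n,∞)` generated by the transposition
`(k, n+1)` (in 0-based indexing, `Equiv.swap k n`) and the stabilizer `S(n,∞)`. -/
theorem statement7
    {H : Type*} [NormedAddCommGroup H] [InnerProductSpace ℂ H] [CompleteSpace H]
    (K : Equiv.Perm ℕ →* (H →L[ℂ] H))
    (hunit : ∀ g (η : H), ‖K g η‖ = ‖η‖)
    (hcont : ∀ (η : H) (ε : ℝ), 0 < ε → ∃ k : ℕ, ∀ s ∈ stabSet k, ‖K s η - η‖ < ε)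
    (n k : ℕ) (P O : H →L[ℂ] H)
    (hP : ∀ η ζ : H, Tendsto (fun m => ⟪K (sigmaPerm n m) η, ζ⟫_ℂ) atTop (𝓝 ⟪P η, ζ⟫_ℂ))
    (hO : ∀ η ζ : H, Tendsto (fun N => ⟪K (Equiv.swap k N) η, ζ⟫_ℂ) atTop (𝓝 ⟪O η, ζ⟫_ℂ))
    (hPsa : IsSelfAdjoint P) (hPidem : P.comp P = P)
    (hOsa : IsSelfAdjoint O) (hOidem : O.comp O = O)
    (hcomm : P.comp O = O.comp P) :
    IsSelfAdjoint (O.comp P) ∧ (O.comp P).comp (O.comp P) = O.comp P ∧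
      Set.range (O.comp P) =
        {η : H | ∀ s ∈ Subgroup.closure ({Equiv.swap k n} ∪ stabSet n), K s η = η} := by
  have hmul : ∀ (a b : Equiv.Perm ℕ) (x : H), K (a * b) x = K a (K b x) := fun a b x => by
    rw [map_mul]; rfl
  have hd : ∀ (g : Equiv.Perm ℕ) (x y : H), ‖K g x - K g y‖ = ‖x - y‖ := fun g x y => by
    rw [← map_sub]; exact hunit g _
  have hcommpt : ∀ x : H, P (O x) = O (P x) := fun x => ContinuousLinearMap.ext_iff.mp hcomm x
  have hPpt : ∀ x : H, P (P x) = P x := fun x => ContinuousLinearMap.ext_iff.mp hPidem x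
  have hOpt : ∀ x : H, O (O x) = O x := fun x => ContinuousLinearMap.ext_iff.mp hOidem x
  have hσstab : ∀ m, sigmaPerm n m ∈ stabSet n := fun m i hi => sigmaPerm_fix n m i hi
  have hswapstab : ∀ N, n ≤ N → Equiv.swap n N ∈ stabSet n := by
    intro N hN i hi
    exact Equiv.swap_apply_of_ne_of_ne (by omega) (by omega)
  -- part 1 : self-adjoint
  have part1 : IsSelfAdjoint (O.comp P) := by
    show star (O * P) = O * P
    rw [star_mul, hPsa.star_eq, hOsa.star_eq]
    exact hcomm
  -- part 2 : idempotent
  have part2 : (O.comp P).comp (O.comp P) = O.comp P := by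
    ext x
    simp only [ContinuousLinearMap.comp_apply]
    rw [hcommpt, hPpt, hOpt]
  refine ⟨part1, part2, ?_⟩
  ext η
  simp only [Set.mem_range, Set.mem_setOf_eq]
  constructor
  · -- range ⊆ fixed vectors
    rintro ⟨ξ, rfl⟩
    set η := (O.comp P) ξ with hη
    have hηO : η = O (P ξ) := rfl
    have hPη : P η = η := by
      rw [hηO, hcommpt, hPpt]
    have hOη : O η = η := by
      rw [hηO, hOpt]
    have hσst : Tendsto (fun m => K (sigmaPerm n m) η) atTop (𝓝 η) := by
      apply strong_conv η _ (fun m => hunit _ η)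
      have := hP η η
      rwa [hPη] at this
    have hOst : Tendsto (fun N => K (Equiv.swap k N) η) atTop (𝓝 η) := by
      apply strong_conv η _ (fun N => hunit _ η)
      have := hO η η
      rwa [hOη] at this
    have hstf : ∀ s ∈ stabSet n, K s η = η := stab_fixes K hunit hcont n η hσst
    have hswapkn : K (Equiv.swap k n) η = η := by
      by_cases hkn : k = n
      · subst hkn
        rw [Equiv.swap_self, ← Equiv.Perm.one_def, map_one]
        rfl
      · rw [← sub_eq_zero, ← norm_le_zero_iff]
        apply le_of_forall_pos_le_add
        intro ε hε
        obtain ⟨N₀, hN₀⟩ := Metric.tendsto_atTop.mp hOst ε hε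
        set N := max N₀ (max k n + 1) with hN
        have hdist : ‖K (Equiv.swap k N) η - η‖ < ε := by
          have := hN₀ N (le_max_left _ _)
          rwa [dist_eq_norm] at this
        have hNk : k ≠ N := by
          have : max k n + 1 ≤ N := le_max_right _ _
          omega
        have hNn : n < N := by
          have : max k n + 1 ≤ N := le_max_right _ _
          omega
        have hid : Equiv.swap n N * Equiv.swap k N * Equiv.swap n N = Equiv.swap k n := by
          have h := Equiv.swap_mul_swap_mul_swap (x := k) (y := N) (z := n) hNk hkn
          rw [Equiv.swap_comm N n] at h
          exact h.trans (Equiv.swap_comm n k)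
        have hNfix : K (Equiv.swap n N) η = η := hstf _ (hswapstab N (by omega))
        have heq : K (Equiv.swap k n) η = K (Equiv.swap n N) (K (Equiv.swap k N) η) := by
          rw [← hid, hmul, hmul, hNfix]
        calc ‖K (Equiv.swap k n) η - η‖
            = ‖K (Equiv.swap n N) (K (Equiv.swap k N) η) - K (Equiv.swap n N) η‖ := by
              rw [heq, hNfix]
          _ = ‖K (Equiv.swap k N) η - η‖ := hd _ _ _
          _ ≤ 0 + ε := by linarith
    -- closure induction
    intro s hsmem
    induction hsmem using Subgroup.closure_induction with
    | mem x hx =>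
      rcases hx with hx | hx
      · rw [Set.mem_singleton_iff] at hx
        rw [hx]
        exact hswapkn
      · exact hstf x hx
    | one => rw [map_one]; rfl
    | mul x y _ _ hx hy => rw [hmul, hy, hx]
    | inv x _ hx =>
      conv_lhs => rw [← hx]
      rw [← hmul, inv_mul_cancel, map_one]
      rfl
  · -- fixed vectors ⊆ range
    intro hfix
    have hσfix : ∀ m, K (sigmaPerm n m) η = η := fun m =>
      hfix _ (Subgroup.subset_closure (Or.inr (hσstab m)))
    have hswapfix : ∀ N, max k n + 1 ≤ N → K (Equiv.swap k N) η = η := by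
      intro N hN
      by_cases hkn : k = n
      · subst hkn
        exact hfix _ (Subgroup.subset_closure (Or.inr (hswapstab N (by omega))))
      · have hNk : k ≠ N := by omega
        have hid : Equiv.swap n N * Equiv.swap k n * Equiv.swap n N = Equiv.swap k N := by
          have h := Equiv.swap_mul_swap_mul_swap (x := k) (y := n) (z := N) hkn hNk
          exact h.trans (Equiv.swap_comm N k)
        rw [← hid]
        apply Subgroup.mul_mem _ (Subgroup.mul_mem _ _ _) _ |> hfix _
        · exact Subgroup.subset_closure (Or.inr (hswapstab N (by omega)))
        · exact Subgroup.subset_closure (Or.inl rfl)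
        · exact Subgroup.subset_closure (Or.inr (hswapstab N (by omega)))
    have hPη : P η = η := by
      apply ext_inner_right ℂ
      intro ζ
      refine tendsto_nhds_unique (hP η ζ) ?_
      apply Tendsto.congr' _ tendsto_const_nhds
      filter_upwards with m
      rw [hσfix m]
    have hOη : O η = η := by
      apply ext_inner_right ℂ
      intro ζ
      refine tendsto_nhds_unique (hO η ζ) ?_
      apply Tendsto.congr' _ tendsto_const_nhds
      filter_upwards [Filter.eventually_ge_atTop (max k n + 1)] with N hN
      rw [hswapfix N hN]
    exact ⟨η, by simp only [ContinuousLinearMap.comp_apply, hPη, hOη]⟩
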